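/- Let μ and ν be the Gaussian measures N(0, σ²I_d) and N(v, σ²I_d) on ℝ^d with σ > 0. Then for any measurable set A ⊆ ℝ^d, |μ(A) - ν(A)| ≤ ‖v‖₂/(2σ). -/

import Mathlib

open MeasureTheory ProbabilityTheory Real

lemma sqrt_gauss_mul {σ2 : NNReal} (hσ2 : σ2 ≠ 0) (c x : ℝ) :
    Real.sqrt (gaussianPDFReal 0 σ2 x * gaussianPDFReal c σ2 x)
      = Real.exp (-(c ^ 2) / (8 * σ2)) * gaussianPDFReal (c / 2) σ2 x := by
  have hs : (0:ℝ) < σ2 := by positivity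
  have key : gaussianPDFReal 0 σ2 x * gaussianPDFReal c σ2 x
      = (Real.exp (-(c ^ 2) / (8 * σ2)) * gaussianPDFReal (c / 2) σ2 x) ^ 2 := by
    simp only [gaussianPDFReal, sub_zero]
    have he : -x ^ 2 / (2 * (σ2:ℝ)) + -(x - c) ^ 2 / (2 * σ2)
        = (-(c ^ 2) / (8 * σ2) + -(c ^ 2) / (8 * σ2))
          + (-(x - c / 2) ^ 2 / (2 * σ2) + -(x - c / 2) ^ 2 / (2 * σ2)) := by
      field_simp
      ring
    calc (√(2 * π * σ2))⁻¹ * rexp (-x ^ 2 / (2 * σ2))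
          * ((√(2 * π * σ2))⁻¹ * rexp (-(x - c) ^ 2 / (2 * σ2)))
        = ((√(2 * π * σ2))⁻¹)^2 * rexp (-x ^ 2 / (2 * σ2) + -(x - c) ^ 2 / (2 * σ2)) := by
          rw [Real.exp_add]; ring
      _ = ((√(2 * π * σ2))⁻¹)^2 * rexp ((-(c ^ 2) / (8 * σ2) + -(c ^ 2) / (8 * σ2))
            + (-(x - c / 2) ^ 2 / (2 * σ2) + -(x - c / 2) ^ 2 / (2 * σ2))) := by rw [he]
      _ = (rexp (-(c ^ 2) / (8 * σ2)) * ((√(2 * π * σ2))⁻¹ * rexp (-(x - c / 2) ^ 2 / (2 * σ2)))) ^ 2 := by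
          rw [Real.exp_add, Real.exp_add, Real.exp_add]; ring
  rw [key, Real.sqrt_sq (mul_nonneg (Real.exp_nonneg _) (gaussianPDFReal_nonneg _ _ _))]

lemma pi_gauss_eq {d : ℕ} {σ2 : NNReal} (hσ2 : σ2 ≠ 0) (m : Fin d → ℝ) :
    Measure.pi (fun i : Fin d => gaussianReal (m i) σ2)
      = volume.withDensity (fun x => ENNReal.ofReal (∏ i, gaussianPDFReal (m i) σ2 (x i))) := by
  refine Measure.pi_eq fun s hs => ?_
  rw [withDensity_apply _ (MeasurableSet.univ_pi hs), ← lintegral_indicator (MeasurableSet.univ_pi hs)]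
  have hind : ∀ x : Fin d → ℝ,
      (Set.univ.pi s).indicator (fun x => ENNReal.ofReal (∏ i, gaussianPDFReal (m i) σ2 (x i))) x
      = ENNReal.ofReal (∏ i, (s i).indicator (gaussianPDFReal (m i) σ2) (x i)) := by
    intro x
    by_cases hx : x ∈ Set.univ.pi s
    · rw [Set.indicator_of_mem hx]
      congr 1
      refine Finset.prod_congr rfl fun i _ => ?_
      rw [Set.indicator_of_mem (hx i (Set.mem_univ i))]
    · rw [Set.indicator_of_notMem hx]
      obtain ⟨j, hj⟩ := not_forall.mp (fun h => hx (Set.mem_univ_pi.mpr h))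
      rw [Finset.prod_eq_zero (Finset.mem_univ j) (by rw [Set.indicator_of_notMem hj]),
        ENNReal.ofReal_zero]
  simp_rw [hind]
  have hinti : ∀ i, Integrable ((s i).indicator (gaussianPDFReal (m i) σ2)) := fun i =>
    (integrable_gaussianPDFReal _ _).indicator (hs i)
  have hnn : ∀ (i : Fin d) (t : ℝ), 0 ≤ (s i).indicator (gaussianPDFReal (m i) σ2) t := fun i t =>
    Set.indicator_nonneg (fun y _ => gaussianPDFReal_nonneg _ _ _) t
  rw [volume_pi, ← ofReal_integral_eq_lintegral_ofReal (Integrable.fintype_prod hinti)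
      (Filter.Eventually.of_forall fun x => Finset.prod_nonneg fun i _ => hnn i (x i)),
    integral_fintype_prod_eq_prod,
    ENNReal.ofReal_prod_of_nonneg (fun i _ => integral_nonneg (hnn i))]
  refine Finset.prod_congr rfl fun i _ => ?_
  rw [gaussianReal_of_var_ne_zero _ hσ2, withDensity_apply _ (hs i), gaussianPDF_def,
    ← ofReal_integral_eq_lintegral_ofReal ((integrable_gaussianPDFReal _ _).integrableOn)
      (Filter.Eventually.of_forall fun y => gaussianPDFReal_nonneg _ _ _),
    integral_indicator (hs i)]

open MeasureTheory ProbabilityTheory in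
theorem gaussian_shift_tv_bound (d : ℕ) (σ : NNReal) (hσ : 0 < σ) (v : Fin d → ℝ)
    (A : Set (Fin d → ℝ)) (hA : MeasurableSet A) :
    |((Measure.pi fun _ : Fin d => gaussianReal 0 (σ ^ 2)) A).toReal -
        ((Measure.pi fun i : Fin d => gaussianReal (v i) (σ ^ 2)) A).toReal|
      ≤ Real.sqrt (∑ i, (v i) ^ 2) / (2 * σ) := by
  have hσ2 : σ ^ 2 ≠ 0 := pow_ne_zero 2 hσ.ne'
  set σ2 : NNReal := σ ^ 2 with hσ2def
  set P : (Fin d → ℝ) → ℝ := fun x => ∏ i, gaussianPDFReal 0 σ2 (x i) with hPdef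
  set Q : (Fin d → ℝ) → ℝ := fun x => ∏ i, gaussianPDFReal (v i) σ2 (x i) with hQdef
  have hPnn : ∀ x, 0 ≤ P x := fun x => Finset.prod_nonneg fun i _ => gaussianPDFReal_nonneg _ _ _
  have hQnn : ∀ x, 0 ≤ Q x := fun x => Finset.prod_nonneg fun i _ => gaussianPDFReal_nonneg _ _ _
  have hPint : Integrable P := Integrable.fintype_prod fun i => integrable_gaussianPDFReal _ _
  have hQint : Integrable Q := Integrable.fintype_prod fun i => integrable_gaussianPDFReal _ _
  -- measures as integrals
  have happly : ∀ (m : Fin d → ℝ) (B : Set (Fin d → ℝ)), MeasurableSet B →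
      ((Measure.pi fun i : Fin d => gaussianReal (m i) σ2) B).toReal
        = ∫ x in B, ∏ i, gaussianPDFReal (m i) σ2 (x i) := by
    intro m B hB
    rw [pi_gauss_eq hσ2 m, withDensity_apply _ hB, volume_pi,
      ← ofReal_integral_eq_lintegral_ofReal
        ((Integrable.fintype_prod fun i => integrable_gaussianPDFReal (m i) σ2).integrableOn)
        (Filter.Eventually.of_forall fun x =>
          Finset.prod_nonneg fun i _ => gaussianPDFReal_nonneg _ _ _),
      ENNReal.toReal_ofReal]
    exact integral_nonneg fun x => Finset.prod_nonneg fun i _ => gaussianPDFReal_nonneg _ _ _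
  have hμ : ((Measure.pi fun _ : Fin d => gaussianReal 0 σ2) A).toReal = ∫ x in A, P x :=
    happly (fun _ => 0) A hA
  have hν : ((Measure.pi fun i : Fin d => gaussianReal (v i) σ2) A).toReal = ∫ x in A, Q x :=
    happly v A hA
  rw [hμ, hν]
  -- total mass one
  have hPtot : ∫ x, P x = 1 := by
    rw [hPdef, volume_pi, integral_fintype_prod_eq_prod (f := fun _ : Fin d => gaussianPDFReal 0 σ2)]
    exact Finset.prod_eq_one fun i _ => integral_gaussianPDFReal_eq_one 0 hσ2
  have hQtot : ∫ x, Q x = 1 := by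
    rw [hQdef, volume_pi, integral_fintype_prod_eq_prod (f := fun i : Fin d => gaussianPDFReal (v i) σ2)]
    exact Finset.prod_eq_one fun i _ => integral_gaussianPDFReal_eq_one _ hσ2
  -- half TV bound
  set I : ℝ := ∫ x, |P x - Q x| with hIdef
  have hhalf : |(∫ x in A, P x) - ∫ x in A, Q x| ≤ I / 2 := by
    have hPQA : (∫ x in A, P x) - ∫ x in A, Q x = ∫ x in A, (P x - Q x) :=
      (integral_sub hPint.integrableOn hQint.integrableOn).symm
    have hsum : (∫ x in A, (P x - Q x)) + (∫ x in Aᶜ, (P x - Q x)) = 0 := by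
      have h1 := integral_add_compl (μ := volume) hA (hPint.sub hQint)
      simp only [Pi.sub_apply] at h1
      rw [h1, integral_sub hPint hQint, hPtot, hQtot]
      ring
    have habs1 : |∫ x in A, (P x - Q x)| ≤ ∫ x in A, |P x - Q x| := by
      simpa [Real.norm_eq_abs] using
        norm_integral_le_integral_norm (μ := volume.restrict A) (f := fun x => P x - Q x)
    have habs2 : |∫ x in Aᶜ, (P x - Q x)| ≤ ∫ x in Aᶜ, |P x - Q x| := by
      simpa [Real.norm_eq_abs] using
        norm_integral_le_integral_norm (μ := volume.restrict Aᶜ) (f := fun x => P x - Q x)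
    have hIsplit : (∫ x in A, |P x - Q x|) + (∫ x in Aᶜ, |P x - Q x|) = I := by
      have h2 := integral_add_compl (μ := volume) hA (hPint.sub hQint).abs
      simpa [Pi.sub_apply] using h2
    have heq : |∫ x in A, (P x - Q x)| = |∫ x in Aᶜ, (P x - Q x)| := by
      rw [show (∫ x in Aᶜ, (P x - Q x)) = -(∫ x in A, (P x - Q x)) by linarith, abs_neg]
    rw [hPQA]
    linarith [abs_nonneg (∫ x in A, (P x - Q x))]
  refine hhalf.trans ?_
  -- Cauchy-Schwarz / Hellinger step
  set S : ℝ := ∑ i, (v i) ^ 2 with hSdef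
  have hSnn : 0 ≤ S := Finset.sum_nonneg fun i _ => sq_nonneg _
  set R : ℝ := rexp (-S / (8 * (σ2:ℝ))) with hRdef
  have hRnn : 0 ≤ R := Real.exp_nonneg _
  have hR1 : R ≤ 1 := by
    rw [hRdef, Real.exp_le_one_iff]
    rw [div_nonpos_iff]
    exact Or.inr ⟨neg_nonpos.mpr hSnn, by positivity⟩
  set W : (Fin d → ℝ) → ℝ :=
    fun x => ∏ i, (rexp (-(v i ^ 2) / (8 * (σ2:ℝ))) * gaussianPDFReal (v i / 2) σ2 (x i))
    with hWdef
  have hWnn : ∀ x, 0 ≤ W x := fun x => Finset.prod_nonneg fun i _ =>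
    mul_nonneg (Real.exp_nonneg _) (gaussianPDFReal_nonneg _ _ _)
  have hWint : Integrable W := Integrable.fintype_prod fun i =>
    (integrable_gaussianPDFReal _ _).const_mul _
  have hWsqrt : ∀ x, Real.sqrt (P x * Q x) = W x := by
    intro x
    have h1 : P x * Q x = ∏ i, (gaussianPDFReal 0 σ2 (x i) * gaussianPDFReal (v i) σ2 (x i)) :=
      (Finset.prod_mul_distrib).symm
    have h2 : (∏ i, Real.sqrt (gaussianPDFReal 0 σ2 (x i) * gaussianPDFReal (v i) σ2 (x i))) ^ 2
        = ∏ i, (gaussianPDFReal 0 σ2 (x i) * gaussianPDFReal (v i) σ2 (x i)) := by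
      rw [← Finset.prod_pow]
      exact Finset.prod_congr rfl fun i _ => Real.sq_sqrt
        (mul_nonneg (gaussianPDFReal_nonneg _ _ _) (gaussianPDFReal_nonneg _ _ _))
    rw [h1, ← h2, Real.sqrt_sq (Finset.prod_nonneg fun i _ => Real.sqrt_nonneg _)]
    exact Finset.prod_congr rfl fun i _ => sqrt_gauss_mul hσ2 (v i) (x i)
  have hWtot : ∫ x, W x = R := by
    rw [hWdef, volume_pi, integral_fintype_prod_eq_prod
      (f := fun i t => rexp (-(v i ^ 2) / (8 * (σ2:ℝ))) * gaussianPDFReal (v i / 2) σ2 t)]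
    have : ∀ i : Fin d, ∫ t, rexp (-(v i ^ 2) / (8 * (σ2:ℝ))) * gaussianPDFReal (v i / 2) σ2 t
        = rexp (-(v i ^ 2) / (8 * (σ2:ℝ))) := by
      intro i
      rw [integral_const_mul, integral_gaussianPDFReal_eq_one _ hσ2, mul_one]
    rw [Finset.prod_congr rfl fun i _ => this i, ← Real.exp_sum, hRdef]
    congr 1
    rw [← Finset.sum_div, ← Finset.sum_neg_distrib]
  -- measurability
  have hPm : Measurable P := Finset.measurable_prod _ fun i _ =>
    (measurable_gaussianPDFReal _ _).comp (measurable_pi_apply i)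
  have hQm : Measurable Q := Finset.measurable_prod _ fun i _ =>
    (measurable_gaussianPDFReal _ _).comp (measurable_pi_apply i)
  -- pointwise identities
  have hid1 : ∀ x, |P x - Q x|
      = |Real.sqrt (P x) - Real.sqrt (Q x)| * (Real.sqrt (P x) + Real.sqrt (Q x)) := by
    intro x
    have h1 : P x - Q x
        = (Real.sqrt (P x) - Real.sqrt (Q x)) * (Real.sqrt (P x) + Real.sqrt (Q x)) := by
      have := Real.sq_sqrt (hPnn x); have := Real.sq_sqrt (hQnn x); nlinarith
    rw [h1, abs_mul]
    congr 1
    exact abs_of_nonneg (by positivity)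
  have hid2 : ∀ x, |Real.sqrt (P x) - Real.sqrt (Q x)| ^ 2 = P x + Q x - 2 * W x := by
    intro x
    have hsm : Real.sqrt (P x) * Real.sqrt (Q x) = W x := by
      rw [← Real.sqrt_mul (hPnn x), hWsqrt x]
    rw [sq_abs, sub_sq, Real.sq_sqrt (hPnn x), Real.sq_sqrt (hQnn x), mul_assoc, hsm]
    ring
  have hid3 : ∀ x, (Real.sqrt (P x) + Real.sqrt (Q x)) ^ 2 = P x + Q x + 2 * W x := by
    intro x
    have hsm : Real.sqrt (P x) * Real.sqrt (Q x) = W x := by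
      rw [← Real.sqrt_mul (hPnn x), hWsqrt x]
    rw [add_sq, Real.sq_sqrt (hPnn x), Real.sq_sqrt (hQnn x), mul_assoc, hsm]
    ring
  -- Cauchy-Schwarz in ENNReal
  have h22 : Real.HolderConjugate 2 2 := Real.HolderConjugate.two_two
  have hfm : AEMeasurable (fun x => ENNReal.ofReal |Real.sqrt (P x) - Real.sqrt (Q x)|) volume :=
    ((hPm.sqrt.sub hQm.sqrt).abs.ennreal_ofReal).aemeasurable
  have hgm : AEMeasurable (fun x => ENNReal.ofReal (Real.sqrt (P x) + Real.sqrt (Q x))) volume :=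
    ((hPm.sqrt.add hQm.sqrt).ennreal_ofReal).aemeasurable
  have hCS := ENNReal.lintegral_mul_le_Lp_mul_Lq volume h22 hfm hgm
  have hLHS : (∫⁻ x, ((fun x => ENNReal.ofReal |Real.sqrt (P x) - Real.sqrt (Q x)|)
        * (fun x => ENNReal.ofReal (Real.sqrt (P x) + Real.sqrt (Q x)))) x)
      = ENNReal.ofReal I := by
    have hpt : ∀ x, ((fun x => ENNReal.ofReal |Real.sqrt (P x) - Real.sqrt (Q x)|)
        * (fun x => ENNReal.ofReal (Real.sqrt (P x) + Real.sqrt (Q x)))) x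
        = ENNReal.ofReal |P x - Q x| := by
      intro x
      simp only [Pi.mul_apply]
      rw [← ENNReal.ofReal_mul (abs_nonneg _), ← hid1 x]
    rw [lintegral_congr hpt, ← ofReal_integral_eq_lintegral_ofReal
      (f := fun x => |P x - Q x|) ((hPint.sub hQint).abs)
      (Filter.Eventually.of_forall fun x => abs_nonneg _)]
  have hF2 : (∫⁻ x, (ENNReal.ofReal |Real.sqrt (P x) - Real.sqrt (Q x)|) ^ (2:ℝ))
      = ENNReal.ofReal (2 - 2 * R) := by
    have hpt : ∀ x, (ENNReal.ofReal |Real.sqrt (P x) - Real.sqrt (Q x)|) ^ (2:ℝ)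
        = ENNReal.ofReal (P x + Q x - 2 * W x) := by
      intro x
      rw [ENNReal.rpow_two, ← ENNReal.ofReal_pow (abs_nonneg _), hid2 x]
    rw [lintegral_congr hpt, ← ofReal_integral_eq_lintegral_ofReal
      (f := fun x => P x + Q x - 2 * W x) ((hPint.add hQint).sub (hWint.const_mul 2))
      (Filter.Eventually.of_forall fun x => by
        simp only [Pi.zero_apply]; rw [← hid2 x]; exact sq_nonneg _),
      integral_sub (f := fun x => P x + Q x) (g := fun x => 2 * W x)
        (hPint.add hQint) (hWint.const_mul 2), integral_add hPint hQint,
      hPtot, hQtot, integral_const_mul, hWtot]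
    congr 1
    ring
  have hG2 : (∫⁻ x, (ENNReal.ofReal (Real.sqrt (P x) + Real.sqrt (Q x))) ^ (2:ℝ))
      = ENNReal.ofReal (2 + 2 * R) := by
    have hpt : ∀ x, (ENNReal.ofReal (Real.sqrt (P x) + Real.sqrt (Q x))) ^ (2:ℝ)
        = ENNReal.ofReal (P x + Q x + 2 * W x) := by
      intro x
      rw [ENNReal.rpow_two, ← ENNReal.ofReal_pow (by positivity), hid3 x]
    rw [lintegral_congr hpt, ← ofReal_integral_eq_lintegral_ofReal
      (f := fun x => P x + Q x + 2 * W x) ((hPint.add hQint).add (hWint.const_mul 2))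
      (Filter.Eventually.of_forall fun x => by
        simp only [Pi.zero_apply]
        exact add_nonneg (add_nonneg (hPnn x) (hQnn x)) (by linarith [hWnn x])),
      integral_add (f := fun x => P x + Q x) (g := fun x => 2 * W x)
        (hPint.add hQint) (hWint.const_mul 2), integral_add hPint hQint,
      hPtot, hQtot, integral_const_mul, hWtot]
    congr 1
    ring
  rw [hLHS, hF2, hG2] at hCS
  have hRHS : ENNReal.ofReal (2 - 2 * R) ^ ((1:ℝ)/2) * ENNReal.ofReal (2 + 2 * R) ^ ((1:ℝ)/2)
      ≤ ENNReal.ofReal (Real.sqrt (2 - 2 * R) * 2) := by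
    have h1 : ENNReal.ofReal (2 - 2 * R) ^ ((1:ℝ)/2)
        = ENNReal.ofReal (Real.sqrt (2 - 2 * R)) := by
      rw [ENNReal.ofReal_rpow_of_nonneg (by linarith) (by norm_num), ← Real.sqrt_eq_rpow]
    have h2 : ENNReal.ofReal (2 + 2 * R) ^ ((1:ℝ)/2) ≤ ENNReal.ofReal 2 := by
      calc ENNReal.ofReal (2 + 2 * R) ^ ((1:ℝ)/2) ≤ ENNReal.ofReal 4 ^ ((1:ℝ)/2) :=
            ENNReal.rpow_le_rpow (ENNReal.ofReal_le_ofReal (by linarith)) (by norm_num)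
        _ = ENNReal.ofReal 2 := by
            rw [ENNReal.ofReal_rpow_of_nonneg (by norm_num) (by norm_num), ← Real.sqrt_eq_rpow,
              show (4:ℝ) = 2 ^ 2 by norm_num, Real.sqrt_sq (by norm_num)]
    rw [h1, ENNReal.ofReal_mul (Real.sqrt_nonneg _)]
    exact mul_le_mul_right h2 _
  have hIle : I ≤ Real.sqrt (2 - 2 * R) * 2 :=
    (ENNReal.ofReal_le_ofReal_iff (by positivity)).mp (hCS.trans hRHS)
  have hσc : (0:ℝ) < (σ:ℝ) := hσ
  have hσ2c : (σ2:ℝ) = (σ:ℝ) ^ 2 := by rw [hσ2def]; push_cast; ring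
  have h2R : 2 - 2 * R ≤ S / (2 * (σ:ℝ)) ^ 2 := by
    have ht := Real.add_one_le_exp (-S / (8 * (σ2:ℝ)))
    rw [← hRdef] at ht
    have h8 : (0:ℝ) < 8 * (σ2:ℝ) := by rw [hσ2c]; positivity
    have : 2 * (S / (8 * (σ2:ℝ))) = S / (2 * (σ:ℝ)) ^ 2 := by
      rw [hσ2c]; field_simp; ring
    rw [neg_div] at ht
    linarith
  have hfin : Real.sqrt (2 - 2 * R) ≤ Real.sqrt S / (2 * (σ:ℝ)) := by
    calc Real.sqrt (2 - 2 * R) ≤ Real.sqrt (S / (2 * (σ:ℝ)) ^ 2) := Real.sqrt_le_sqrt h2R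
      _ = Real.sqrt S / (2 * (σ:ℝ)) := by
          rw [Real.sqrt_div hSnn, Real.sqrt_sq (by positivity)]
  linarith
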